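/- Let X, Y, X', Y' be measurable spaces, R ⊆ X × Y and Q ⊆ X' × Y' relations, (x, y) ∈ R, and ν₁, ν₂ probability measures on X' and Y' respectively with dp(ε,δ)(Q)(ν₁, ν₂). Then dp(ε,δ)(R ×̇ Q)(ν₁.map (fun a => (x, a)), ν₂.map (fun b => (y, b))), where R ×̇ Q = {((a, a'), (b, b')) | (a, b) ∈ R ∧ (a', b') ∈ Q} ⊆ (X × X') × (Y × Y'). (This is the strength law of the graded relational lifting for differential privacy.) -/

import Mathlib

open MeasureTheory ENNReal

/-- The `(ε,δ)`-closeness condition on distributions over `Bool`: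
`ν₁ {false} ≤ exp ε · ν₂ {false} + δ`. -/
def Scond (ε δ : NNReal) (ν₁ ν₂ : Measure Bool) : Prop :=
  ν₁ {false} ≤ ENNReal.ofReal (Real.exp ε) * ν₂ {false} + δ

/-- The graded relational lifting for differential privacy. -/
def dp {X Y : Type*} [MeasurableSpace X] [MeasurableSpace Y]
    (ε δ : NNReal) (R : Set (X × Y)) (μ₁ : Measure X) (μ₂ : Measure Y) : Prop :=
  ∀ (ε' δ' : NNReal) (f : X → Measure Bool) (g : Y → Measure Bool),
    Measurable f → Measurable g →
    (∀ x, IsProbabilityMeasure (f x)) → (∀ y, IsProbabilityMeasure (g y)) →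
    (∀ x y, (x, y) ∈ R → Scond ε' δ' (f x) (g y)) →
    Scond (ε + ε') (δ + δ') (μ₁.bind f) (μ₂.bind g)

lemma map_bind_aux {α β γ : Type*} [MeasurableSpace α] [MeasurableSpace β] [MeasurableSpace γ]
    (μ : Measure α) {e : α → β} (he : Measurable e) {f : β → Measure γ} (hf : Measurable f) :
    (μ.map e).bind f = μ.bind (fun a => f (e a)) := by
  ext s hs
  rw [Measure.bind_apply hs hf.aemeasurable, Measure.bind_apply hs (show Measurable fun a => f (e a) from hf.comp he).aemeasurable,
    MeasureTheory.lintegral_map (show Measurable fun b => f b s from (Measure.measurable_coe hs).comp hf) he]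

/-- Strength law of the graded relational lifting for differential privacy. -/
theorem dp_strength {X Y X' Y' : Type*} [MeasurableSpace X] [MeasurableSpace Y]
    [MeasurableSpace X'] [MeasurableSpace Y']
    (R : Set (X × Y)) (Q : Set (X' × Y')) (ε δ : NNReal)
    (x : X) (y : Y) (hxy : (x, y) ∈ R)
    (ν₁ : Measure X') (ν₂ : Measure Y')
    [IsProbabilityMeasure ν₁] [IsProbabilityMeasure ν₂]
    (h : dp ε δ Q ν₁ ν₂) :
    dp ε δ
      {p : (X × X') × (Y × Y') | (p.1.1, p.2.1) ∈ R ∧ (p.1.2, p.2.2) ∈ Q}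
      (ν₁.map fun a => (x, a)) (ν₂.map fun b => (y, b)) := by
  intro ε' δ' f g hf hg hfp hgp hS
  rw [map_bind_aux _ (measurable_prodMk_left) hf,
    map_bind_aux _ (measurable_prodMk_left) hg]
  exact h ε' δ' _ _ (hf.comp measurable_prodMk_left) (hg.comp measurable_prodMk_left)
    (fun a => hfp _) (fun b => hgp _) (fun a b hab => hS (x, a) (y, b) ⟨hxy, hab⟩)
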